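/- Let T_n^k = {1,3,...,2k-1} ∪ {2k, 2k+2, ..., 2(k+n-1)}. Then Lambda_{T_1^k} = 1, and for n >= 3, Lambda_{T_n^k} = (y + xbar) Lambda_{T_{n-1}^k}(x+1, y, z, xbar+1, ybar, zbar) + (ybar - y - xbar) Lambda_{T_{n-1}^k}(x, y, z, xbar, ybar, zbar). -/
import Mathlib


attribute [local instance] Classical.propDecidable

noncomputable section

/-- The second-largest even element of `S` (0 if there is none). -/
def sndEvenMax (S : Finset ℕ) : ℕ :=
  ((S.filter fun a => Even a).erase (S.sup id)).sup id

/-- `S'`: the elements of `S` that are at most the second-largest even element. -/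
def Sprime (S : Finset ℕ) : Finset ℕ := S.filter fun a => a ≤ sndEvenMax S

/-- Generalized surjective staircases on `S`: excedent maps from `S` onto the even
elements of `S`. -/
def Staircases (S : Finset ℕ) : Finset (↥S → ↥S) :=
  Finset.univ.filter fun f =>
    (∀ a : ↥S, (a : ℕ) ≤ (f a : ℕ) ∧ Even ((f a : ℕ))) ∧
    (∀ b : ↥S, Even (b : ℕ) → ∃ a : ↥S, f a = b)

/-- number of odd maxima -/
def moS (S : Finset ℕ) (f : ↥S → ↥S) : ℕ :=
  (Finset.univ.filter fun a : ↥S =>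
    (a : ℕ) ≤ sndEvenMax S ∧ Odd (a : ℕ) ∧ ((f a : ℕ) = S.sup id)).card

/-- number of even maxima -/
def meS (S : Finset ℕ) (f : ↥S → ↥S) : ℕ :=
  (Finset.univ.filter fun a : ↥S =>
    (a : ℕ) ≤ sndEvenMax S ∧ Even (a : ℕ) ∧ ((f a : ℕ) = S.sup id)).card

def IsFixedPtS (S : Finset ℕ) (f : ↥S → ↥S) (a : ↥S) : Prop :=
  (a : ℕ) ≤ sndEvenMax S ∧ Even (a : ℕ) ∧ f a = a

/-- number of isolated fixed points -/
def fiS (S : Finset ℕ) (f : ↥S → ↥S) : ℕ :=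
  (Finset.univ.filter fun a : ↥S =>
    IsFixedPtS S f a ∧ ∀ b : ↥S, f b = a → b = a).card

/-- number of doubled fixed points -/
def fdS (S : Finset ℕ) (f : ↥S → ↥S) : ℕ :=
  (Finset.univ.filter fun a : ↥S =>
    IsFixedPtS S f a ∧ ∃ b : ↥S, b ≠ a ∧ f b = a).card

/-- the least even element of `S` larger than `a` -/
def nextEven (S : Finset ℕ) (a : ℕ) : ℕ := sInf {b : ℕ | b ∈ S ∧ Even b ∧ a < b}

def IsSurfixedPtS (S : Finset ℕ) (f : ↥S → ↥S) (a : ↥S) : Prop :=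
  (a : ℕ) ≤ sndEvenMax S ∧ Odd (a : ℕ) ∧ (f a : ℕ) = nextEven S (a : ℕ)

/-- number of isolated surfixed points -/
def siS (S : Finset ℕ) (f : ↥S → ↥S) : ℕ :=
  (Finset.univ.filter fun a : ↥S =>
    IsSurfixedPtS S f a ∧ ∀ b : ↥S, f b = f a → b = a).card

/-- number of doubled surfixed points -/
def sdS (S : Finset ℕ) (f : ↥S → ↥S) : ℕ :=
  (Finset.univ.filter fun a : ↥S =>
    IsSurfixedPtS S f a ∧ ∃ b : ↥S, b ≠ a ∧ f b = f a).card

/-- The generalized Dumont–Foata polynomial `Λ_S`, evaluated at elements of a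
commutative ring. -/
def Lam (R : Type) [CommRing R] (S : Finset ℕ) (x y z xb yb zb : R) : R :=
  ∑ f ∈ Staircases S,
    x ^ moS S f * y ^ fdS S f * z ^ siS S f * xb ^ meS S f * yb ^ fiS S f * zb ^ sdS S f


/-- `T_n^k = {1,3,…,2k-1} ∪ {2k, 2k+2, …, 2(k+n-1)}`. -/
def Tnk (k n : ℕ) : Finset ℕ :=
  ((Finset.range k).image fun i => 2 * i + 1) ∪
    ((Finset.range n).image fun i => 2 * k + 2 * i)

section Aux

lemma mem_Tnk {k n a : ℕ} :
    a ∈ Tnk k n ↔ (a % 2 = 1 ∧ a < 2*k) ∨ (a % 2 = 0 ∧ 2*k ≤ a ∧ a < 2*k+2*n) := by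
  simp only [Tnk, Finset.mem_union, Finset.mem_image, Finset.mem_range]
  constructor
  · rintro (⟨i, hi, rfl⟩ | ⟨i, hi, rfl⟩) <;> omega
  · rintro (⟨h1, h2⟩ | ⟨h1, h2, h3⟩)
    · exact Or.inl ⟨a / 2, by omega, by omega⟩
    · exact Or.inr ⟨(a - 2*k) / 2, by omega, by omega⟩

lemma sup_Tnk {k n : ℕ} : (Tnk k (n+1)).sup id = 2*k + 2*n := by
  apply le_antisymm
  · apply Finset.sup_le
    intro a ha
    rw [mem_Tnk] at ha
    simp only [id]
    omega
  · exact Finset.le_sup (f := id) (by rw [mem_Tnk]; omega)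

lemma sndEvenMax_Tnk {k n : ℕ} :
    sndEvenMax (Tnk k (n+2)) = 2*k + 2*n := by
  have hs : (Tnk k (n+2)).sup id = 2*k + 2*(n+1) := sup_Tnk
  unfold sndEvenMax
  rw [hs]
  apply le_antisymm
  · apply Finset.sup_le
    intro a ha
    simp only [Finset.mem_erase, Finset.mem_filter, mem_Tnk, Nat.even_iff] at ha
    simp only [id]
    omega
  · apply Finset.le_sup (f := id)
    simp only [Finset.mem_erase, Finset.mem_filter, mem_Tnk, Nat.even_iff]
    omega

lemma sndEvenMax_Tnk1 {k : ℕ} : sndEvenMax (Tnk k 1) = 0 := by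
  have hs : (Tnk k 1).sup id = 2*k := sup_Tnk
  unfold sndEvenMax
  rw [hs]
  apply Nat.le_zero.mp
  apply Finset.sup_le
  intro a ha
  simp only [Finset.mem_erase, Finset.mem_filter, mem_Tnk, Nat.even_iff] at ha
  simp only [id]
  omega

lemma lam_T1 (k : ℕ) (hk : 1 ≤ k) (R : Type) [CommRing R] (x y z xb yb zb : R) :
    Lam R (Tnk k 1) x y z xb yb zb = 1 := by
  have h2k : (2*k : ℕ) ∈ Tnk k 1 := by rw [mem_Tnk]; omega
  have key : ∀ a : ↥(Tnk k 1), ¬ ((a : ℕ) ≤ sndEvenMax (Tnk k 1)) := by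
    intro a
    rw [sndEvenMax_Tnk1]
    have := a.2
    rw [mem_Tnk] at this
    omega
  set c : ↥(Tnk k 1) → ↥(Tnk k 1) := fun _ => ⟨2*k, h2k⟩ with hc
  have hval : ∀ a : ↥(Tnk k 1), Even (a : ℕ) → (a : ℕ) = 2*k := by
    intro a ha
    have := a.2
    rw [mem_Tnk] at this
    rw [Nat.even_iff] at ha
    omega
  have hsc : Staircases (Tnk k 1) = {c} := by
    ext f
    simp only [Staircases, Finset.mem_filter, Finset.mem_univ, true_and,
      Finset.mem_singleton]
    constructor
    · rintro ⟨h1, h2⟩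
      funext a
      have := (h1 a).2
      exact Subtype.ext ((hval _ this).trans rfl)
    · rintro rfl
      refine ⟨fun a => ⟨?_, ?_⟩, fun b hb => ⟨b, ?_⟩⟩
      · have := a.2
        rw [mem_Tnk] at this
        show (a : ℕ) ≤ 2*k
        omega
      · show Even (2*k)
        exact ⟨k, by ring⟩
      · exact Subtype.ext ((hval b hb).symm)
  unfold Lam
  rw [hsc, Finset.sum_singleton]
  have e1 : moS (Tnk k 1) c = 0 := by
    unfold moS; rw [Finset.card_eq_zero, Finset.filter_eq_empty_iff]
    intro a _ h; exact key a h.1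
  have e2 : fdS (Tnk k 1) c = 0 := by
    unfold fdS; rw [Finset.card_eq_zero, Finset.filter_eq_empty_iff]
    intro a _ h; have h' := h.1; unfold IsFixedPtS at h'; exact key a h'.1
  have e3 : siS (Tnk k 1) c = 0 := by
    unfold siS; rw [Finset.card_eq_zero, Finset.filter_eq_empty_iff]
    intro a _ h; have h' := h.1; unfold IsSurfixedPtS at h'; exact key a h'.1
  have e4 : meS (Tnk k 1) c = 0 := by
    unfold meS; rw [Finset.card_eq_zero, Finset.filter_eq_empty_iff]
    intro a _ h; exact key a h.1
  have e5 : fiS (Tnk k 1) c = 0 := by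
    unfold fiS; rw [Finset.card_eq_zero, Finset.filter_eq_empty_iff]
    intro a _ h; have h' := h.1; unfold IsFixedPtS at h'; exact key a h'.1
  have e6 : sdS (Tnk k 1) c = 0 := by
    unfold sdS; rw [Finset.card_eq_zero, Finset.filter_eq_empty_iff]
    intro a _ h; have h' := h.1; unfold IsSurfixedPtS at h'; exact key a h'.1
  rw [e1, e2, e3, e4, e5, e6]
  simp

end Aux

section Step

variable {k p : ℕ}

/-- max of `T_{p+3}^k` -/
def MV (k p : ℕ) : ℕ := 2*k+2*(p+2)
/-- second even max of `T_{p+3}^k`, max of `T_{p+2}^k` -/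
def mV (k p : ℕ) : ℕ := 2*k+2*(p+1)

lemma MV_mem : MV k p ∈ Tnk k (p+3) := by rw [mem_Tnk]; unfold MV; omega
lemma mV_mem0 : mV k p ∈ Tnk k (p+3) := by rw [mem_Tnk]; unfold mV; omega
lemma mV_mem1 : mV k p ∈ Tnk k (p+2) := by rw [mem_Tnk]; unfold mV; omega
lemma S1_sub {a : ℕ} (h : a ∈ Tnk k (p+2)) : a ∈ Tnk k (p+3) := by
  rw [mem_Tnk] at h ⊢; omega
lemma mem_S1 {a : ℕ} (h : a ∈ Tnk k (p+3)) (hne : a ≠ MV k p) : a ∈ Tnk k (p+2) := by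
  rw [mem_Tnk] at h ⊢; unfold MV at hne; omega
lemma le_MV {a : ℕ} (h : a ∈ Tnk k (p+3)) : a ≤ MV k p := by
  rw [mem_Tnk] at h; unfold MV; omega
lemma le_mV {a : ℕ} (h : a ∈ Tnk k (p+2)) : a ≤ mV k p := by
  rw [mem_Tnk] at h; unfold mV; omega
lemma le_snd1 {a : ℕ} (h : a ∈ Tnk k (p+2)) (hne : a ≠ mV k p) : a ≤ 2*k+2*p := by
  rw [mem_Tnk] at h; unfold mV at hne; omega
lemma snd0 : sndEvenMax (Tnk k (p+3)) = mV k p := sndEvenMax_Tnk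
lemma snd1 : sndEvenMax (Tnk k (p+2)) = 2*k+2*p := sndEvenMax_Tnk
lemma sup0 : (Tnk k (p+3)).sup id = MV k p := sup_Tnk
lemma sup1 : (Tnk k (p+2)).sup id = mV k p := sup_Tnk

/-- inclusion of `T_{p+2}^k` into `T_{p+3}^k` -/
def incl (a : ↥(Tnk k (p+2))) : ↥(Tnk k (p+3)) := ⟨a.1, S1_sub a.2⟩

@[simp] lemma incl_val (a : ↥(Tnk k (p+2))) : (incl a : ℕ) = (a : ℕ) := rfl

/-- the top element of `T_{p+3}^k` -/
def topE (k p : ℕ) : ↥(Tnk k (p+3)) := ⟨MV k p, MV_mem⟩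
/-- `m` as an element of `T_{p+3}^k` -/
def mE0 (k p : ℕ) : ↥(Tnk k (p+3)) := ⟨mV k p, mV_mem0⟩
/-- `m` as an element of `T_{p+2}^k` -/
def mE1 (k p : ℕ) : ↥(Tnk k (p+2)) := ⟨mV k p, mV_mem1⟩

lemma incl_mE1 : incl (mE1 k p) = mE0 k p := rfl

/-- the reduction of a staircase on `T_{p+3}^k` to one on `T_{p+2}^k` -/
def Phi (f : ↥(Tnk k (p+3)) → ↥(Tnk k (p+3))) (a : ↥(Tnk k (p+2))) : ↥(Tnk k (p+2)) :=
  if h : ((f (incl a)) : ℕ) = MV k p then mE1 k p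
  else ⟨(f (incl a) : ℕ), mem_S1 (f (incl a)).2 h⟩

/-- the set of elements sent to the maximum -/
def Bset (f : ↥(Tnk k (p+3)) → ↥(Tnk k (p+3))) : Finset ↥(Tnk k (p+2)) :=
  Finset.univ.filter fun a => ((f (incl a)) : ℕ) = MV k p

/-- the fiber of a staircase on `T_{p+2}^k` above the maximum -/
def fib (g : ↥(Tnk k (p+2)) → ↥(Tnk k (p+2))) : Finset ↥(Tnk k (p+2)) :=
  Finset.univ.filter fun a => ((g a) : ℕ) = mV k p

/-- reconstruction of a staircase on `T_{p+3}^k` from one on `T_{p+2}^k` plus a subset -/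
def Psi (g : ↥(Tnk k (p+2)) → ↥(Tnk k (p+2))) (B : Finset ↥(Tnk k (p+2)))
    (a : ↥(Tnk k (p+3))) : ↥(Tnk k (p+3)) :=
  if h : (a : ℕ) = MV k p then topE k p
  else if (⟨(a : ℕ), mem_S1 a.2 h⟩ : ↥(Tnk k (p+2))) ∈ B then topE k p
  else incl (g ⟨(a : ℕ), mem_S1 a.2 h⟩)

lemma mem_Bset {f : ↥(Tnk k (p+3)) → ↥(Tnk k (p+3))} {a : ↥(Tnk k (p+2))} :
    a ∈ Bset f ↔ ((f (incl a)) : ℕ) = MV k p := by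
  simp [Bset]

lemma mem_fib {g : ↥(Tnk k (p+2)) → ↥(Tnk k (p+2))} {a : ↥(Tnk k (p+2))} :
    a ∈ fib g ↔ ((g a) : ℕ) = mV k p := by
  simp [fib]

lemma Phi_val_mem {f : ↥(Tnk k (p+3)) → ↥(Tnk k (p+3))} {a : ↥(Tnk k (p+2))}
    (h : a ∈ Bset f) : (Phi f a : ℕ) = mV k p := by
  rw [mem_Bset] at h; unfold Phi; rw [dif_pos h]; rfl

lemma Phi_val_notMem {f : ↥(Tnk k (p+3)) → ↥(Tnk k (p+3))} {a : ↥(Tnk k (p+2))}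
    (h : a ∉ Bset f) : (Phi f a : ℕ) = (f (incl a) : ℕ) := by
  rw [mem_Bset] at h; unfold Phi; rw [dif_neg h]

lemma stair_iff {S : Finset ℕ} {f : ↥S → ↥S} :
    f ∈ Staircases S ↔
      (∀ a : ↥S, (a : ℕ) ≤ (f a : ℕ) ∧ Even ((f a : ℕ))) ∧
      (∀ b : ↥S, Even (b : ℕ) → ∃ a : ↥S, f a = b) := by
  unfold Staircases; simp

lemma f_top {f : ↥(Tnk k (p+3)) → ↥(Tnk k (p+3))} (hf : f ∈ Staircases (Tnk k (p+3))) :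
    f (topE k p) = topE k p := by
  rw [stair_iff] at hf
  have h1 := (hf.1 (topE k p)).1
  have h2 := le_MV (f (topE k p)).2
  exact Subtype.ext (le_antisymm h2 h1)

lemma g_top {g : ↥(Tnk k (p+2)) → ↥(Tnk k (p+2))} (hg : g ∈ Staircases (Tnk k (p+2))) :
    g (mE1 k p) = mE1 k p := by
  rw [stair_iff] at hg
  have h1 := (hg.1 (mE1 k p)).1
  have h2 := le_mV (g (mE1 k p)).2
  exact Subtype.ext (le_antisymm h2 h1)

lemma mE1_mem_fib {g : ↥(Tnk k (p+2)) → ↥(Tnk k (p+2))}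
    (hg : g ∈ Staircases (Tnk k (p+2))) : mE1 k p ∈ fib g := by
  rw [mem_fib, g_top hg]; rfl

/-- even values `≥ m` in `T_{p+3}^k` are `m` or `M` -/
lemma even_high {a : ℕ} (h : a ∈ Tnk k (p+3)) (he : Even a) (hge : mV k p ≤ a) :
    a = mV k p ∨ a = MV k p := by
  rw [mem_Tnk] at h; rw [Nat.even_iff] at he; unfold mV at hge ⊢; unfold MV; omega

lemma nextEven_Tnk {k n a : ℕ} (h : a < 2*k) : nextEven (Tnk k (n+1)) a = 2*k := by
  unfold nextEven
  have h2k : (2*k : ℕ) ∈ {b : ℕ | b ∈ Tnk k (n+1) ∧ Even b ∧ a < b} := by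
    refine ⟨by rw [mem_Tnk]; omega, ⟨k, by ring⟩, h⟩
  apply le_antisymm
  · exact Nat.sInf_le h2k
  · have hmem := Nat.sInf_mem ⟨2*k, h2k⟩
    obtain ⟨hb1, hb2, hb3⟩ := hmem
    rw [mem_Tnk] at hb1
    rw [Nat.even_iff] at hb2
    omega

lemma odd_small {a : ℕ} (h : a ∈ Tnk k (p+3)) (ho : Odd a) : a < 2*k := by
  rw [mem_Tnk] at h; rw [Nat.odd_iff] at ho; omega

lemma odd_small1 {a : ℕ} (h : a ∈ Tnk k (p+2)) (ho : Odd a) : a < 2*k := by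
  rw [mem_Tnk] at h; rw [Nat.odd_iff] at ho; omega


lemma notMem_Bset_of_ne {f : ↥(Tnk k (p+3)) → ↥(Tnk k (p+3))} {a : ↥(Tnk k (p+2))}
    (h : ((f (incl a)) : ℕ) ≠ MV k p) : a ∉ Bset f := by
  rw [mem_Bset]; exact h

lemma even_MV : Even (MV k p) := ⟨k+(p+2), by unfold MV; ring⟩
lemma even_mV : Even (mV k p) := ⟨k+(p+1), by unfold mV; ring⟩
lemma mV_lt_MV : mV k p < MV k p := by unfold mV MV; omega

lemma val_ne_MV (a : ↥(Tnk k (p+2))) : ((incl a) : ℕ) ≠ MV k p := by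
  show (a : ℕ) ≠ MV k p
  have := le_mV a.2
  have := mV_lt_MV (k := k) (p := p)
  omega

/-- evaluation of `Psi` away from the maximum -/
lemma Psi_eval (g : ↥(Tnk k (p+2)) → ↥(Tnk k (p+2))) (B : Finset ↥(Tnk k (p+2)))
    (a : ↥(Tnk k (p+2))) :
    Psi g B (incl a) = if a ∈ B then topE k p else incl (g a) := by
  unfold Psi
  rw [dif_neg (val_ne_MV a)]
  have hrw : ∀ (h : ((incl a : ℕ)) ≠ MV k p),
      (⟨((incl a) : ℕ), mem_S1 (incl a).2 h⟩ : ↥(Tnk k (p+2))) = a :=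
    fun _ => Subtype.ext rfl
  rw [hrw]
  exact val_ne_MV a

lemma Psi_eval_top (g : ↥(Tnk k (p+2)) → ↥(Tnk k (p+2))) (B : Finset ↥(Tnk k (p+2))) :
    Psi g B (topE k p) = topE k p := by
  unfold Psi
  exact dif_pos rfl

lemma Phi_mem {f : ↥(Tnk k (p+3)) → ↥(Tnk k (p+3))}
    (hf : f ∈ Staircases (Tnk k (p+3))) : Phi f ∈ Staircases (Tnk k (p+2)) := by
  have htop := f_top hf
  rw [stair_iff] at hf ⊢
  obtain ⟨hf1, hf2⟩ := hf
  constructor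
  · intro a
    by_cases h : a ∈ Bset f
    · rw [Phi_val_mem h]
      exact ⟨le_mV a.2, even_mV⟩
    · rw [Phi_val_notMem h]
      exact ⟨(hf1 (incl a)).1, (hf1 (incl a)).2⟩
  · intro b hb
    obtain ⟨a0, ha0⟩ := hf2 (incl b) hb
    have hne : (a0 : ℕ) ≠ MV k p := by
      intro hM
      have ha0t : a0 = topE k p := Subtype.ext hM
      rw [ha0t, htop] at ha0
      have : MV k p = (b : ℕ) := congrArg Subtype.val ha0
      exact val_ne_MV b this.symm
    refine ⟨⟨(a0 : ℕ), mem_S1 a0.2 hne⟩, ?_⟩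
    have hi : incl (⟨(a0 : ℕ), mem_S1 a0.2 hne⟩ : ↥(Tnk k (p+2))) = a0 := Subtype.ext rfl
    have hB : (⟨(a0 : ℕ), mem_S1 a0.2 hne⟩ : ↥(Tnk k (p+2))) ∉ Bset f := by
      rw [mem_Bset, hi, ha0]
      exact val_ne_MV b
    apply Subtype.ext
    rw [Phi_val_notMem hB, hi, ha0]
    rfl

lemma Psi_mem {g : ↥(Tnk k (p+2)) → ↥(Tnk k (p+2))} {B : Finset ↥(Tnk k (p+2))}
    (hg : g ∈ Staircases (Tnk k (p+2))) (hB : B ⊆ fib g) (hne : B ≠ fib g) :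
    Psi g B ∈ Staircases (Tnk k (p+3)) := by
  have hg' := hg
  rw [stair_iff] at hg' ⊢
  obtain ⟨hg1, hg2⟩ := hg'
  constructor
  · intro a
    by_cases h : (a : ℕ) = MV k p
    · have hat : a = topE k p := Subtype.ext h
      rw [hat, Psi_eval_top]
      exact ⟨le_refl _, even_MV⟩
    · have ha' : a = incl (⟨(a : ℕ), mem_S1 a.2 h⟩ : ↥(Tnk k (p+2))) := Subtype.ext rfl
      rw [ha', Psi_eval]
      by_cases h2 : (⟨(a : ℕ), mem_S1 a.2 h⟩ : ↥(Tnk k (p+2))) ∈ B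
      · rw [if_pos h2]
        exact ⟨le_MV a.2, even_MV⟩
      · rw [if_neg h2]
        exact ⟨(hg1 ⟨(a : ℕ), mem_S1 a.2 h⟩).1, (hg1 ⟨(a : ℕ), mem_S1 a.2 h⟩).2⟩
  · intro b hb
    by_cases h : (b : ℕ) = MV k p
    · refine ⟨topE k p, ?_⟩
      rw [Psi_eval_top]
      exact Subtype.ext h.symm
    · by_cases h2 : (b : ℕ) = mV k p
      · have hss : B ⊂ fib g := lt_of_le_of_ne hB hne
        obtain ⟨a', ha'f, ha'B⟩ := Finset.exists_of_ssubset hss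
        refine ⟨incl a', ?_⟩
        rw [Psi_eval, if_neg ha'B]
        apply Subtype.ext
        show ((g a') : ℕ) = (b : ℕ)
        rw [mem_fib] at ha'f
        rw [ha'f, h2]
      · obtain ⟨a', ha'⟩ := hg2 ⟨(b : ℕ), mem_S1 b.2 h⟩ hb
        have haB : a' ∉ B := by
          intro hmem
          have hfib := mem_fib.mp (hB hmem)
          rw [ha'] at hfib
          exact h2 hfib
        refine ⟨incl a', ?_⟩
        rw [Psi_eval, if_neg haB, ha']
        exact Subtype.ext rfl

lemma Bset_subset_fib {f : ↥(Tnk k (p+3)) → ↥(Tnk k (p+3))} :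
    Bset f ⊆ fib (Phi f) := by
  intro a ha
  rw [mem_fib]
  exact Phi_val_mem ha

lemma Bset_ne_fib {f : ↥(Tnk k (p+3)) → ↥(Tnk k (p+3))}
    (hf : f ∈ Staircases (Tnk k (p+3))) : Bset f ≠ fib (Phi f) := by
  have htop := f_top hf
  rw [stair_iff] at hf
  obtain ⟨hf1, hf2⟩ := hf
  obtain ⟨a0, ha0⟩ := hf2 (mE0 k p) even_mV
  have hne : (a0 : ℕ) ≠ MV k p := by
    intro hM
    have ha0t : a0 = topE k p := Subtype.ext hM
    rw [ha0t, htop] at ha0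
    have : MV k p = mV k p := congrArg Subtype.val ha0
    exact absurd this (by have := mV_lt_MV (k := k) (p := p); omega)
  set a' : ↥(Tnk k (p+2)) := ⟨(a0 : ℕ), mem_S1 a0.2 hne⟩ with ha'def
  have hi : incl a' = a0 := Subtype.ext rfl
  have hnB : a' ∉ Bset f := by
    rw [mem_Bset, hi, ha0]
    have := mV_lt_MV (k := k) (p := p)
    show mV k p ≠ MV k p
    omega
  have hfib : a' ∈ fib (Phi f) := by
    rw [mem_fib, Phi_val_notMem hnB, hi, ha0]
    rfl
  intro heq
  rw [heq] at hnB
  exact hnB hfib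

lemma Psi_Phi {f : ↥(Tnk k (p+3)) → ↥(Tnk k (p+3))}
    (hf : f ∈ Staircases (Tnk k (p+3))) : Psi (Phi f) (Bset f) = f := by
  have htop := f_top hf
  funext a
  by_cases h : (a : ℕ) = MV k p
  · have hat : a = topE k p := Subtype.ext h
    rw [hat, Psi_eval_top, htop]
  · have ha' : a = incl (⟨(a : ℕ), mem_S1 a.2 h⟩ : ↥(Tnk k (p+2))) := Subtype.ext rfl
    rw [ha', Psi_eval]
    by_cases h2 : (⟨(a : ℕ), mem_S1 a.2 h⟩ : ↥(Tnk k (p+2))) ∈ Bset f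
    · rw [if_pos h2]
      exact Subtype.ext (mem_Bset.mp h2).symm
    · rw [if_neg h2]
      apply Subtype.ext
      show ((Phi f _) : ℕ) = _
      rw [Phi_val_notMem h2]
lemma Phi_Psi {g : ↥(Tnk k (p+2)) → ↥(Tnk k (p+2))} {B : Finset ↥(Tnk k (p+2))}
    (hB : B ⊆ fib g) : Phi (Psi g B) = g := by
  funext a
  by_cases h : a ∈ B
  · have hv : Psi g B (incl a) = topE k p := by rw [Psi_eval, if_pos h]
    have hmem : a ∈ Bset (Psi g B) := mem_Bset.mpr (by rw [hv]; rfl)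
    apply Subtype.ext
    rw [Phi_val_mem hmem]
    exact (mem_fib.mp (hB h)).symm
  · have hv : Psi g B (incl a) = incl (g a) := by rw [Psi_eval, if_neg h]
    have hnB : a ∉ Bset (Psi g B) := by
      rw [mem_Bset, hv]
      exact val_ne_MV (g a)
    apply Subtype.ext
    rw [Phi_val_notMem hnB, hv]
    rfl

lemma Bset_Psi {g : ↥(Tnk k (p+2)) → ↥(Tnk k (p+2))} {B : Finset ↥(Tnk k (p+2))} :
    Bset (Psi g B) = B := by
  ext a
  rw [mem_Bset, Psi_eval]
  by_cases h : a ∈ B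
  · simp only [h, if_true, iff_true]
    rfl
  · simp only [h, if_false, iff_false]
    exact val_ne_MV (g a)


@[simp] lemma incl_mk (a : ↥(Tnk k (p+3))) (h : (a : ℕ) ∈ Tnk k (p+2)) :
    incl ⟨(a : ℕ), h⟩ = a := Subtype.ext rfl

lemma card_transfer {p0 : ↥(Tnk k (p+3)) → Prop} {q : ↥(Tnk k (p+2)) → Prop}
    [DecidablePred p0] [DecidablePred q]
    (hMp : ∀ a : ↥(Tnk k (p+3)), p0 a → (a : ℕ) ≠ MV k p)
    (hiff : ∀ a : ↥(Tnk k (p+2)), p0 (incl a) ↔ q a) :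
    (Finset.univ.filter p0).card = (Finset.univ.filter q).card := by
  refine Finset.card_bij'
    (fun (a : ↥(Tnk k (p+3))) ha =>
      (⟨(a : ℕ), mem_S1 a.2 (hMp a (Finset.mem_filter.mp ha).2)⟩ : ↥(Tnk k (p+2))))
    (fun (b : ↥(Tnk k (p+2))) _ => incl b) ?hi ?hj ?left ?right
  case hi =>
    intro a ha
    have h2 := (Finset.mem_filter.mp ha).2
    simp only [Finset.mem_filter, Finset.mem_univ, true_and]
    rw [← hiff]
    simpa only [incl_mk] using h2
  case hj =>
    intro b hb
    have h2 := (Finset.mem_filter.mp hb).2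
    simp only [Finset.mem_filter, Finset.mem_univ, true_and]
    exact (hiff b).mpr h2
  case left =>
    intro a ha
    simp only [incl_mk]
  case right =>
    intro b hb
    exact Subtype.ext rfl

lemma card_split (p0 : ↥(Tnk k (p+3)) → Prop) [DecidablePred p0] :
    (Finset.univ.filter p0).card =
      (Finset.univ.filter fun a => p0 a ∧ (a : ℕ) ≠ mV k p).card +
      (Finset.univ.filter fun a => p0 a ∧ (a : ℕ) = mV k p).card := by
  have h := Finset.card_filter_add_card_filter_not
    (s := Finset.univ.filter p0) (p := fun a : ↥(Tnk k (p+3)) => (a : ℕ) = mV k p)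
  rw [Finset.filter_filter, Finset.filter_filter] at h
  have e1 : (Finset.univ.filter fun a : ↥(Tnk k (p+3)) => p0 a ∧ ¬ (a : ℕ) = mV k p)
      = (Finset.univ.filter fun a : ↥(Tnk k (p+3)) => p0 a ∧ (a : ℕ) ≠ mV k p) := by
    ext a
    simp only [Finset.mem_filter]
  rw [e1] at h
  omega

lemma card_single (p0 : ↥(Tnk k (p+3)) → Prop) [DecidablePred p0] :
    (Finset.univ.filter fun a => p0 a ∧ (a : ℕ) = mV k p).card
      = if p0 (mE0 k p) then 1 else 0 := by
  by_cases h : p0 (mE0 k p)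
  · rw [if_pos h, Finset.card_eq_one]
    refine ⟨mE0 k p, ?_⟩
    ext x
    simp only [Finset.mem_filter, Finset.mem_univ, true_and, Finset.mem_singleton]
    constructor
    · rintro ⟨hp, hv⟩
      exact Subtype.ext hv
    · rintro rfl
      exact ⟨h, rfl⟩
  · rw [if_neg h, Finset.card_eq_zero, Finset.filter_eq_empty_iff]
    rintro x _ ⟨hp, hv⟩
    exact h (by rwa [show x = mE0 k p from Subtype.ext hv] at hp)

lemma down_preimage {f : ↥(Tnk k (p+3)) → ↥(Tnk k (p+3))}
    (hf : f ∈ Staircases (Tnk k (p+3))) {b0 : ↥(Tnk k (p+3))} {c : ℕ}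
    (hc : c ≠ MV k p) (hfb : ((f b0) : ℕ) = c) :
    ∃ b1 : ↥(Tnk k (p+2)), incl b1 = b0 ∧ b1 ∉ Bset f ∧ ((Phi f b1) : ℕ) = c := by
  have hne : (b0 : ℕ) ≠ MV k p := by
    intro hM
    have hb : b0 = topE k p := Subtype.ext hM
    rw [hb, f_top hf] at hfb
    exact hc (hfb.symm ▸ rfl)
  have hB : (⟨(b0 : ℕ), mem_S1 b0.2 hne⟩ : ↥(Tnk k (p+2))) ∉ Bset f := by
    simp only [mem_Bset, incl_mk, hfb]
    exact hc
  refine ⟨⟨(b0 : ℕ), mem_S1 b0.2 hne⟩, Subtype.ext rfl, hB, ?_⟩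
  rw [Phi_val_notMem hB]
  simp only [incl_mk]
  exact hfb

lemma stat_mo {f : ↥(Tnk k (p+3)) → ↥(Tnk k (p+3))} :
    moS (Tnk k (p+3)) f = ((Bset f).filter (fun a : ↥(Tnk k (p+2)) => Odd (a : ℕ))).card := by
  unfold moS
  rw [sup0, snd0]
  have h := card_transfer
    (p0 := fun a : ↥(Tnk k (p+3)) =>
      (a : ℕ) ≤ mV k p ∧ Odd (a : ℕ) ∧ ((f a) : ℕ) = MV k p)
    (q := fun a : ↥(Tnk k (p+2)) => Odd (a : ℕ) ∧ a ∈ Bset f)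
    (by rintro a ⟨h1, -, -⟩
        have := mV_lt_MV (k := k) (p := p)
        omega)
    (by intro a
        constructor
        · rintro ⟨h1, h2, h3⟩
          exact ⟨h2, mem_Bset.mpr h3⟩
        · rintro ⟨h2, h3⟩
          exact ⟨le_mV a.2, h2, mem_Bset.mp h3⟩)
  have e : (Finset.univ.filter fun a : ↥(Tnk k (p+2)) => Odd (a : ℕ) ∧ a ∈ Bset f)
      = (Bset f).filter (fun a : ↥(Tnk k (p+2)) => Odd (a : ℕ)) := by
    ext a
    simp only [Finset.mem_filter, Finset.mem_univ, true_and]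
    exact and_comm
  rw [h, e]

lemma stat_me {f : ↥(Tnk k (p+3)) → ↥(Tnk k (p+3))} :
    meS (Tnk k (p+3)) f = ((Bset f).filter (fun a : ↥(Tnk k (p+2)) => Even (a : ℕ))).card := by
  unfold meS
  rw [sup0, snd0]
  have h := card_transfer
    (p0 := fun a : ↥(Tnk k (p+3)) =>
      (a : ℕ) ≤ mV k p ∧ Even (a : ℕ) ∧ ((f a) : ℕ) = MV k p)
    (q := fun a : ↥(Tnk k (p+2)) => Even (a : ℕ) ∧ a ∈ Bset f)
    (by rintro a ⟨h1, -, -⟩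
        have := mV_lt_MV (k := k) (p := p)
        omega)
    (by intro a
        constructor
        · rintro ⟨h1, h2, h3⟩
          exact ⟨h2, mem_Bset.mpr h3⟩
        · rintro ⟨h2, h3⟩
          exact ⟨le_mV a.2, h2, mem_Bset.mp h3⟩)
  have e : (Finset.univ.filter fun a : ↥(Tnk k (p+2)) => Even (a : ℕ) ∧ a ∈ Bset f)
      = (Bset f).filter (fun a : ↥(Tnk k (p+2)) => Even (a : ℕ)) := by
    ext a
    simp only [Finset.mem_filter, Finset.mem_univ, true_and]
    exact and_comm
  rw [h, e]

lemma two_k_ne_MV : 2*k ≠ MV k p := by unfold MV; omega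
lemma two_k_ne_mV : 2*k ≠ mV k p := by unfold mV; omega

lemma stat_si {f : ↥(Tnk k (p+3)) → ↥(Tnk k (p+3))}
    (hf : f ∈ Staircases (Tnk k (p+3))) :
    siS (Tnk k (p+3)) f = siS (Tnk k (p+2)) (Phi f) := by
  unfold siS
  apply card_transfer
  · rintro a ⟨h1, -⟩
    unfold IsSurfixedPtS at h1
    have h2 := h1.1
    rw [snd0] at h2
    have := mV_lt_MV (k := k) (p := p)
    omega
  · intro a
    constructor
    · rintro ⟨h1, h4⟩
      unfold IsSurfixedPtS at h1 ⊢
      obtain ⟨-, h2, h3⟩ := h1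
      have hodd : Odd (a : ℕ) := h2
      have hlt : (a : ℕ) < 2*k := odd_small1 a.2 hodd
      rw [show ((incl a : ℕ)) = (a : ℕ) from rfl, nextEven_Tnk hlt] at h3
      have hB : a ∉ Bset f := by rw [mem_Bset, h3]; exact two_k_ne_MV
      have hval : ((Phi f a) : ℕ) = 2*k := by rw [Phi_val_notMem hB]; exact h3
      refine ⟨⟨?_, hodd, ?_⟩, ?_⟩
      · rw [snd1]; omega
      · rw [nextEven_Tnk hlt]; exact hval
      · intro b hb
        have hbval : ((Phi f b) : ℕ) = 2*k := by rw [hb, hval]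
        have hbB : b ∉ Bset f := by
          intro hmem
          rw [Phi_val_mem hmem] at hbval
          exact two_k_ne_mV hbval.symm
        have hfv : ((f (incl b)) : ℕ) = 2*k := by
          rw [← Phi_val_notMem hbB]; exact hbval
        have heq := h4 (incl b) (Subtype.ext (by rw [hfv, ← h3]))
        apply Subtype.ext
        have h6 := congrArg Subtype.val heq
        exact h6
    · rintro ⟨h1, h4⟩
      unfold IsSurfixedPtS at h1 ⊢
      obtain ⟨-, h2, h3⟩ := h1
      have hodd : Odd (a : ℕ) := h2
      have hlt : (a : ℕ) < 2*k := odd_small1 a.2 hodd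
      rw [nextEven_Tnk hlt] at h3
      have hB : a ∉ Bset f := by
        intro hmem
        rw [Phi_val_mem hmem] at h3
        exact two_k_ne_mV h3.symm
      have hval : ((f (incl a)) : ℕ) = 2*k := by
        rw [← Phi_val_notMem hB]; exact h3
      refine ⟨⟨?_, hodd, ?_⟩, ?_⟩
      · rw [snd0, incl_val]; unfold mV; omega
      · rw [show ((incl a : ℕ)) = (a : ℕ) from rfl, nextEven_Tnk hlt]; exact hval
      · intro b0 hb0
        have hc : ((f b0) : ℕ) = 2*k := by rw [hb0, hval]
        obtain ⟨b1, hb1i, hb1B, hb1v⟩ := down_preimage hf two_k_ne_MV hc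
        have hba : b1 = a := h4 b1 (Subtype.ext (by rw [hb1v, h3]))
        rw [← hb1i, hba]

lemma stat_sd {f : ↥(Tnk k (p+3)) → ↥(Tnk k (p+3))}
    (hf : f ∈ Staircases (Tnk k (p+3))) :
    sdS (Tnk k (p+3)) f = sdS (Tnk k (p+2)) (Phi f) := by
  unfold sdS
  apply card_transfer
  · rintro a ⟨h1, -⟩
    unfold IsSurfixedPtS at h1
    have h2 := h1.1
    rw [snd0] at h2
    have := mV_lt_MV (k := k) (p := p)
    omega
  · intro a
    constructor
    · rintro ⟨h1, b0, hbne, hb0⟩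
      unfold IsSurfixedPtS at h1 ⊢
      obtain ⟨-, h2, h3⟩ := h1
      have hodd : Odd (a : ℕ) := h2
      have hlt : (a : ℕ) < 2*k := odd_small1 a.2 hodd
      rw [show ((incl a : ℕ)) = (a : ℕ) from rfl, nextEven_Tnk hlt] at h3
      have hB : a ∉ Bset f := by rw [mem_Bset, h3]; exact two_k_ne_MV
      have hval : ((Phi f a) : ℕ) = 2*k := by rw [Phi_val_notMem hB]; exact h3
      refine ⟨⟨?_, hodd, ?_⟩, ?_⟩
      · rw [snd1]; omega
      · rw [nextEven_Tnk hlt]; exact hval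
      · -- produce doubled witness
        have hc : ((f b0) : ℕ) = 2*k := by rw [hb0, h3]
        obtain ⟨b1, hb1i, hb1B, hb1v⟩ := down_preimage hf two_k_ne_MV hc
        refine ⟨b1, ?_, Subtype.ext (by rw [hb1v, hval])⟩
        intro hba
        apply hbne
        rw [← hb1i, hba]
    · rintro ⟨h1, b1, hbne, hb1⟩
      unfold IsSurfixedPtS at h1 ⊢
      obtain ⟨-, h2, h3⟩ := h1
      have hodd : Odd (a : ℕ) := h2
      have hlt : (a : ℕ) < 2*k := odd_small1 a.2 hodd
      rw [nextEven_Tnk hlt] at h3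
      have hB : a ∉ Bset f := by
        intro hmem
        rw [Phi_val_mem hmem] at h3
        exact two_k_ne_mV h3.symm
      have hval : ((f (incl a)) : ℕ) = 2*k := by
        rw [← Phi_val_notMem hB]; exact h3
      have hbB : b1 ∉ Bset f := by
        intro hmem
        have := Phi_val_mem hmem
        rw [hb1, h3] at this
        exact two_k_ne_mV this
      refine ⟨⟨?_, hodd, ?_⟩, ?_⟩
      · rw [snd0, incl_val]; unfold mV; omega
      · rw [show ((incl a : ℕ)) = (a : ℕ) from rfl, nextEven_Tnk hlt]; exact hval
      · refine ⟨incl b1, ?_, ?_⟩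
        · intro hba
          apply hbne
          apply Subtype.ext
          have h6 := congrArg Subtype.val hba
          exact h6
        · apply Subtype.ext
          rw [hval, ← Phi_val_notMem hbB, hb1, h3]


lemma mV_ne_MV : mV k p ≠ MV k p := by unfold mV MV; omega

lemma incl_inj {a b : ↥(Tnk k (p+2))} (h : incl a = incl b) : a = b := by
  apply Subtype.ext
  have h6 := congrArg Subtype.val h
  exact h6

lemma fibm_iff {g : ↥(Tnk k (p+2)) → ↥(Tnk k (p+2))} {a : ↥(Tnk k (p+2))} :
    a ∈ (fib g).erase (mE1 k p) ↔ ((g a) : ℕ) = mV k p ∧ (a : ℕ) ≠ mV k p := by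
  simp only [Finset.mem_erase, mem_fib]
  constructor
  · rintro ⟨h1, h2⟩
    exact ⟨h2, fun h => h1 (Subtype.ext h)⟩
  · rintro ⟨h1, h2⟩
    exact ⟨fun h => h2 (congrArg Subtype.val h), h1⟩

lemma mo_g {g : ↥(Tnk k (p+2)) → ↥(Tnk k (p+2))} :
    moS (Tnk k (p+2)) g =
      (((fib g).erase (mE1 k p)).filter fun a : ↥(Tnk k (p+2)) => Odd (a : ℕ)).card := by
  unfold moS
  rw [sup1, snd1]
  have e : (Finset.univ.filter fun a : ↥(Tnk k (p+2)) =>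
        (a : ℕ) ≤ 2*k+2*p ∧ Odd (a : ℕ) ∧ ((g a) : ℕ) = mV k p)
      = ((fib g).erase (mE1 k p)).filter fun a : ↥(Tnk k (p+2)) => Odd (a : ℕ) := by
    ext a
    simp only [Finset.mem_filter, Finset.mem_univ, true_and, fibm_iff]
    constructor
    · rintro ⟨h1, h2, h3⟩
      exact ⟨⟨h3, by unfold mV; omega⟩, h2⟩
    · rintro ⟨⟨h3, hne⟩, h2⟩
      exact ⟨le_snd1 a.2 hne, h2, h3⟩
  rw [e]

lemma me_g {g : ↥(Tnk k (p+2)) → ↥(Tnk k (p+2))} :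
    meS (Tnk k (p+2)) g =
      (((fib g).erase (mE1 k p)).filter fun a : ↥(Tnk k (p+2)) => Even (a : ℕ)).card := by
  unfold meS
  rw [sup1, snd1]
  have e : (Finset.univ.filter fun a : ↥(Tnk k (p+2)) =>
        (a : ℕ) ≤ 2*k+2*p ∧ Even (a : ℕ) ∧ ((g a) : ℕ) = mV k p)
      = ((fib g).erase (mE1 k p)).filter fun a : ↥(Tnk k (p+2)) => Even (a : ℕ) := by
    ext a
    simp only [Finset.mem_filter, Finset.mem_univ, true_and, fibm_iff]
    constructor
    · rintro ⟨h1, h2, h3⟩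
      exact ⟨⟨h3, by unfold mV; omega⟩, h2⟩
    · rintro ⟨⟨h3, hne⟩, h2⟩
      exact ⟨le_snd1 a.2 hne, h2, h3⟩
  rw [e]

lemma fixed_at_m {f : ↥(Tnk k (p+3)) → ↥(Tnk k (p+3))}
    (hf : f ∈ Staircases (Tnk k (p+3))) :
    f (mE0 k p) = mE0 k p ↔ mE1 k p ∉ Bset f := by
  have hf' := hf
  rw [stair_iff] at hf'
  obtain ⟨hf1, -⟩ := hf'
  constructor
  · intro hfm hmem
    rw [mem_Bset, incl_mE1, hfm] at hmem
    have h7 : mV k p = MV k p := hmem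
    exact mV_ne_MV h7
  · intro hnm
    have h1 := (hf1 (mE0 k p)).1
    have h2 := (hf1 (mE0 k p)).2
    have h3 := even_high (f (mE0 k p)).2 h2 h1
    rcases h3 with h3 | h3
    · exact Subtype.ext h3
    · exfalso
      exact hnm (mem_Bset.mpr (by rw [incl_mE1]; exact h3))

lemma stat_fd {f : ↥(Tnk k (p+3)) → ↥(Tnk k (p+3))}
    (hf : f ∈ Staircases (Tnk k (p+3))) :
    fdS (Tnk k (p+3)) f = fdS (Tnk k (p+2)) (Phi f) +
      (if mE1 k p ∉ Bset f ∧ ¬ (fib (Phi f)).erase (mE1 k p) ⊆ Bset f then 1 else 0) := by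
  unfold fdS
  rw [card_split]
  congr 1
  · -- away from m
    apply card_transfer
    · rintro a ⟨⟨hfix, -⟩, -⟩
      unfold IsFixedPtS at hfix
      have h2 := hfix.1
      rw [snd0] at h2
      have := mV_lt_MV (k := k) (p := p)
      omega
    · intro a
      constructor
      · rintro ⟨⟨hfix, b0, hbne, hfb⟩, hne⟩
        unfold IsFixedPtS at hfix
        obtain ⟨-, ha2, ha3⟩ := hfix
        have hB : a ∉ Bset f := notMem_Bset_of_ne (by rw [ha3]; exact val_ne_MV a)
        have hPhi : Phi f a = a := Subtype.ext (by rw [Phi_val_notMem hB, ha3]; rfl)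
        refine ⟨?_, ?_⟩
        · unfold IsFixedPtS
          refine ⟨?_, ha2, hPhi⟩
          rw [snd1]
          exact le_snd1 a.2 hne
        · have hbval : ((f b0) : ℕ) = (a : ℕ) := by rw [hfb]; rfl
          obtain ⟨b1, hb1i, hb1B, hb1v⟩ := down_preimage hf
            (c := (a : ℕ)) (val_ne_MV a) hbval
          refine ⟨b1, ?_, Subtype.ext hb1v⟩
          intro hba
          apply hbne
          rw [← hb1i, hba]
      · rintro ⟨hfix, b1, hbne, hgb⟩
        unfold IsFixedPtS at hfix
        obtain ⟨ha1, ha2, ha3⟩ := hfix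
        rw [snd1] at ha1
        have hanm : (a : ℕ) ≠ mV k p := by unfold mV; omega
        have hB : a ∉ Bset f := by
          intro hmem
          have h7 := Phi_val_mem hmem
          rw [ha3] at h7
          exact hanm h7
        have hfv : f (incl a) = incl a :=
          Subtype.ext (by rw [← Phi_val_notMem hB, ha3]; rfl)
        refine ⟨⟨?_, ?_⟩, hanm⟩
        · unfold IsFixedPtS
          refine ⟨?_, ha2, hfv⟩
          rw [snd0, incl_val]
          unfold mV
          omega
        · have hb1B : b1 ∉ Bset f := by
            intro hmem
            have h7 := Phi_val_mem hmem
            rw [hgb] at h7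
            exact hanm h7
          refine ⟨incl b1, ?_, ?_⟩
          · intro h8
            exact hbne (incl_inj h8)
          · apply Subtype.ext
            rw [← Phi_val_notMem hb1B, hgb]
            rfl
  · -- at m
    rw [card_single]
    apply if_congr _ rfl rfl
    constructor
    · rintro ⟨hfix, b0, hbne, hfb⟩
      unfold IsFixedPtS at hfix
      obtain ⟨-, -, hfm⟩ := hfix
      refine ⟨(fixed_at_m hf).mp hfm, ?_⟩
      have hbval : ((f b0) : ℕ) = mV k p := by rw [hfb]; rfl
      obtain ⟨b1, hb1i, hb1B, hb1v⟩ := down_preimage hf (c := mV k p) mV_ne_MV hbval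
      have hne1 : b1 ≠ mE1 k p := by
        intro h8
        apply hbne
        rw [← hb1i, h8, incl_mE1]
      intro hsub
      exact hb1B (hsub (Finset.mem_erase.mpr ⟨hne1, mem_fib.mpr hb1v⟩))
    · rintro ⟨h1, h2⟩
      have hfm := (fixed_at_m hf).mpr h1
      refine ⟨?_, ?_⟩
      · unfold IsFixedPtS
        refine ⟨?_, even_mV, hfm⟩
        rw [snd0]
        exact le_refl _
      · obtain ⟨b1, hber, hbB⟩ := Finset.not_subset.mp h2
        obtain ⟨hfib, hvne⟩ := fibm_iff.mp hber
        refine ⟨incl b1, ?_, ?_⟩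
        · intro h8
          exact hvne (congrArg Subtype.val h8)
        · apply Subtype.ext
          rw [← Phi_val_notMem hbB]
          exact hfib
  -- leftover side goal of if_congr? none

lemma stat_fi {f : ↥(Tnk k (p+3)) → ↥(Tnk k (p+3))}
    (hf : f ∈ Staircases (Tnk k (p+3))) :
    fiS (Tnk k (p+3)) f = fiS (Tnk k (p+2)) (Phi f) +
      (if mE1 k p ∉ Bset f ∧ (fib (Phi f)).erase (mE1 k p) ⊆ Bset f then 1 else 0) := by
  unfold fiS
  rw [card_split]
  congr 1
  · apply card_transfer
    · rintro a ⟨⟨hfix, -⟩, -⟩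
      unfold IsFixedPtS at hfix
      have h2 := hfix.1
      rw [snd0] at h2
      have := mV_lt_MV (k := k) (p := p)
      omega
    · intro a
      constructor
      · rintro ⟨⟨hfix, h4⟩, hne⟩
        unfold IsFixedPtS at hfix
        obtain ⟨-, ha2, ha3⟩ := hfix
        have hB : a ∉ Bset f := notMem_Bset_of_ne (by rw [ha3]; exact val_ne_MV a)
        have hPhi : Phi f a = a := Subtype.ext (by rw [Phi_val_notMem hB, ha3]; rfl)
        refine ⟨?_, ?_⟩
        · unfold IsFixedPtS
          refine ⟨?_, ha2, hPhi⟩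
          rw [snd1]
          exact le_snd1 a.2 hne
        · intro b1 hg1
          have hb1B : b1 ∉ Bset f := by
            intro hmem
            have h7 := Phi_val_mem hmem
            rw [hg1] at h7
            have h9 : (a : ℕ) ≠ mV k p := hne
            exact h9 h7
          have hfb1 : f (incl b1) = incl a :=
            Subtype.ext (by rw [← Phi_val_notMem hb1B, hg1]; rfl)
          exact incl_inj (h4 (incl b1) hfb1)
      · rintro ⟨hfix, h4⟩
        unfold IsFixedPtS at hfix
        obtain ⟨ha1, ha2, ha3⟩ := hfix
        rw [snd1] at ha1
        have hanm : (a : ℕ) ≠ mV k p := by unfold mV; omega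
        have hB : a ∉ Bset f := by
          intro hmem
          have h7 := Phi_val_mem hmem
          rw [ha3] at h7
          exact hanm h7
        have hfv : f (incl a) = incl a :=
          Subtype.ext (by rw [← Phi_val_notMem hB, ha3]; rfl)
        refine ⟨⟨?_, ?_⟩, hanm⟩
        · unfold IsFixedPtS
          refine ⟨?_, ha2, hfv⟩
          rw [snd0, incl_val]
          unfold mV
          omega
        · intro b0 hb0
          have hbval : ((f b0) : ℕ) = (a : ℕ) := by rw [hb0]; rfl
          obtain ⟨b1, hb1i, hb1B, hb1v⟩ := down_preimage hf
            (c := (a : ℕ)) (val_ne_MV a) hbval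
          have h8 : b1 = a := h4 b1 (Subtype.ext hb1v)
          rw [← hb1i, h8]
  · rw [card_single]
    apply if_congr _ rfl rfl
    constructor
    · rintro ⟨hfix, h4⟩
      unfold IsFixedPtS at hfix
      obtain ⟨-, -, hfm⟩ := hfix
      refine ⟨(fixed_at_m hf).mp hfm, ?_⟩
      intro b1 hb1
      obtain ⟨hfib, hvne⟩ := fibm_iff.mp hb1
      by_contra hbB
      have hfb1 : f (incl b1) = mE0 k p :=
        Subtype.ext (by rw [← Phi_val_notMem hbB]; exact hfib)
      have h8 := h4 (incl b1) hfb1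
      exact hvne (congrArg Subtype.val h8)
    · rintro ⟨h1, h2⟩
      have hfm := (fixed_at_m hf).mpr h1
      refine ⟨?_, ?_⟩
      · unfold IsFixedPtS
        refine ⟨?_, even_mV, hfm⟩
        rw [snd0]
        exact le_refl _
      · intro b0 hb0
        have hbval : ((f b0) : ℕ) = mV k p := by rw [hb0]; rfl
        obtain ⟨b1, hb1i, hb1B, hb1v⟩ := down_preimage hf (c := mV k p) mV_ne_MV hbval
        by_cases h8 : b1 = mE1 k p
        · rw [← hb1i, h8, incl_mE1]
        · exfalso
          apply hb1B
          apply h2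
          exact Finset.mem_erase.mpr ⟨h8, mem_fib.mpr hb1v⟩


lemma sum_powerset_prod {α : Type} [DecidableEq α] {R : Type} [CommRing R]
    (P : Finset α) (w : α → R) :
    ∑ B ∈ P.powerset, ∏ a ∈ B, w a = ∏ a ∈ P, (w a + 1) := by
  rw [Finset.prod_add]
  apply Finset.sum_congr rfl
  intro B hB
  simp

lemma abstract_sum {α : Type} [DecidableEq α] {R : Type} [CommRing R]
    (F : Finset α) (m : α) (hm : m ∈ F) (w : α → R) (y yb r : R) :
    ∑ B ∈ F.powerset.erase F,
        ((∏ a ∈ B, w a) * r *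
          (if m ∉ B ∧ ¬ F.erase m ⊆ B then y else 1) *
          (if m ∉ B ∧ F.erase m ⊆ B then yb else 1)) =
      (y + w m) * ((∏ a ∈ F.erase m, (w a + 1)) * r) +
        (yb - y - w m) * ((∏ a ∈ F.erase m, w a) * r) := by
  set T : Finset α → R := fun B =>
    (∏ a ∈ B, w a) * r *
      (if m ∉ B ∧ ¬ F.erase m ⊆ B then y else 1) *
      (if m ∉ B ∧ F.erase m ⊆ B then yb else 1) with hT
  have hmP : m ∉ F.erase m := Finset.notMem_erase _ _
  have hFP : insert m (F.erase m) = F := Finset.insert_erase hm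
  have h1 := Finset.sum_erase_add F.powerset T (Finset.mem_powerset_self F)
  have hpow : F.powerset = (insert m (F.erase m)).powerset := by rw [hFP]
  have h2 : ∑ B ∈ F.powerset, T B
      = ∑ B ∈ (F.erase m).powerset, T B
        + ∑ B ∈ (F.erase m).powerset, T (insert m B) := by
    rw [hpow, Finset.sum_powerset_insert hmP]
  have h4 : ∀ B ∈ (F.erase m).powerset.erase (F.erase m),
      T B = (∏ a ∈ B, w a) * (r * y) := by
    intro B hB
    obtain ⟨hBne, hBP⟩ := Finset.mem_erase.mp hB
    rw [Finset.mem_powerset] at hBP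
    have hmB : m ∉ B := fun h => hmP (hBP h)
    have hns : ¬ F.erase m ⊆ B := fun h => hBne (Finset.Subset.antisymm hBP h)
    simp only [hT]
    rw [if_pos ⟨hmB, hns⟩, if_neg (fun hc => hns hc.2)]
    ring
  have h5 : T (F.erase m) = (∏ a ∈ F.erase m, w a) * (r * yb) := by
    simp only [hT]
    rw [if_neg (fun hc => hc.2 (Finset.Subset.refl _)), if_pos ⟨hmP, Finset.Subset.refl _⟩]
    ring
  have h6 : ∀ B ∈ (F.erase m).powerset,
      T (insert m B) = (∏ a ∈ B, w a) * (w m * r) := by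
    intro B hB
    have hmB : m ∉ B := fun h => hmP (Finset.mem_powerset.mp hB h)
    simp only [hT]
    rw [Finset.prod_insert hmB,
      if_neg (fun hc => hc.1 (Finset.mem_insert_self m B)),
      if_neg (fun hc => hc.1 (Finset.mem_insert_self m B))]
    ring
  have h7 : T F = (∏ a ∈ F.erase m, w a) * (w m * r) := by
    simp only [hT]
    rw [if_neg (fun hc => hc.1 hm), if_neg (fun hc => hc.1 hm),
      ← Finset.mul_prod_erase F w hm]
    ring
  have e1 : ∑ B ∈ (F.erase m).powerset.erase (F.erase m), T B
      = (∑ B ∈ (F.erase m).powerset.erase (F.erase m), ∏ a ∈ B, w a) * (r * y) := by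
    rw [Finset.sum_mul]
    exact Finset.sum_congr rfl h4
  have e2 : ∑ B ∈ (F.erase m).powerset, T (insert m B)
      = (∑ B ∈ (F.erase m).powerset, ∏ a ∈ B, w a) * (w m * r) := by
    rw [Finset.sum_mul]
    exact Finset.sum_congr rfl h6
  have h3 := Finset.sum_erase_add (F.erase m).powerset T
    (Finset.mem_powerset_self (F.erase m))
  have hrel := Finset.sum_erase_add (F.erase m).powerset (fun B => ∏ a ∈ B, w a)
    (Finset.mem_powerset_self (F.erase m))
  have hQ := sum_powerset_prod (F.erase m) w
  have hmain : ∑ B ∈ F.powerset.erase F, T B = ∑ B ∈ F.powerset, T B - T F :=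
    eq_sub_of_add_eq h1
  rw [hmain, h2, ← h3, e1, h5, e2, h7, hQ]
  rw [hQ] at hrel
  linear_combination (r * y) * hrel

lemma base_prod {R : Type} [CommRing R] (u v : R) (B : Finset ↥(Tnk k (p+2))) :
    (∏ a ∈ B, (if Odd (a : ℕ) then u else v)) =
      u ^ ((B.filter fun a : ↥(Tnk k (p+2)) => Odd (a : ℕ)).card) *
      v ^ ((B.filter fun a : ↥(Tnk k (p+2)) => Even (a : ℕ)).card) := by
  rw [← Finset.prod_filter_mul_prod_filter_not B (fun a => Odd (a : ℕ))]
  have e : B.filter (fun a : ↥(Tnk k (p+2)) => ¬ Odd (a : ℕ))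
      = B.filter (fun a : ↥(Tnk k (p+2)) => Even (a : ℕ)) := by
    ext a
    simp only [Finset.mem_filter, Nat.not_odd_iff_even]
  congr 1
  · rw [Finset.prod_congr rfl (fun a ha => if_pos (Finset.mem_filter.mp ha).2),
      Finset.prod_const]
  · rw [Finset.prod_congr rfl (fun a ha => if_neg (Finset.mem_filter.mp ha).2),
      Finset.prod_const, e]

lemma not_odd_mV : ¬ Odd (mV k p) := by rw [Nat.odd_iff]; unfold mV; omega

lemma innerSumW {g : ↥(Tnk k (p+2)) → ↥(Tnk k (p+2))}
    (hg : g ∈ Staircases (Tnk k (p+2))) {R : Type} [CommRing R] (x y z xb yb zb : R) :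
    ∑ B ∈ ((fib g).powerset).erase (fib g),
      (x ^ ((B.filter fun a : ↥(Tnk k (p+2)) => Odd (a : ℕ)).card) *
        y ^ (fdS (Tnk k (p+2)) g +
          (if mE1 k p ∉ B ∧ ¬ (fib g).erase (mE1 k p) ⊆ B then 1 else 0)) *
        z ^ siS (Tnk k (p+2)) g *
        xb ^ ((B.filter fun a : ↥(Tnk k (p+2)) => Even (a : ℕ)).card) *
        yb ^ (fiS (Tnk k (p+2)) g +
          (if mE1 k p ∉ B ∧ (fib g).erase (mE1 k p) ⊆ B then 1 else 0)) *
        zb ^ sdS (Tnk k (p+2)) g) =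
      (y + xb) * ((x+1) ^ moS (Tnk k (p+2)) g * y ^ fdS (Tnk k (p+2)) g *
          z ^ siS (Tnk k (p+2)) g * (xb+1) ^ meS (Tnk k (p+2)) g *
          yb ^ fiS (Tnk k (p+2)) g * zb ^ sdS (Tnk k (p+2)) g) +
        (yb - y - xb) * (x ^ moS (Tnk k (p+2)) g * y ^ fdS (Tnk k (p+2)) g *
          z ^ siS (Tnk k (p+2)) g * xb ^ meS (Tnk k (p+2)) g *
          yb ^ fiS (Tnk k (p+2)) g * zb ^ sdS (Tnk k (p+2)) g) := by
  set w : ↥(Tnk k (p+2)) → R := fun a => if Odd (a : ℕ) then x else xb with hw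
  set r : R := y ^ fdS (Tnk k (p+2)) g * z ^ siS (Tnk k (p+2)) g *
    yb ^ fiS (Tnk k (p+2)) g * zb ^ sdS (Tnk k (p+2)) g with hr
  have hstep : ∑ B ∈ ((fib g).powerset).erase (fib g),
      (x ^ ((B.filter fun a : ↥(Tnk k (p+2)) => Odd (a : ℕ)).card) *
        y ^ (fdS (Tnk k (p+2)) g +
          (if mE1 k p ∉ B ∧ ¬ (fib g).erase (mE1 k p) ⊆ B then 1 else 0)) *
        z ^ siS (Tnk k (p+2)) g *
        xb ^ ((B.filter fun a : ↥(Tnk k (p+2)) => Even (a : ℕ)).card) *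
        yb ^ (fiS (Tnk k (p+2)) g +
          (if mE1 k p ∉ B ∧ (fib g).erase (mE1 k p) ⊆ B then 1 else 0)) *
        zb ^ sdS (Tnk k (p+2)) g) =
      ∑ B ∈ ((fib g).powerset).erase (fib g),
        ((∏ a ∈ B, w a) * r *
          (if mE1 k p ∉ B ∧ ¬ (fib g).erase (mE1 k p) ⊆ B then y else 1) *
          (if mE1 k p ∉ B ∧ (fib g).erase (mE1 k p) ⊆ B then yb else 1)) := by
    apply Finset.sum_congr rfl
    intro B hB
    simp only [hw, hr]
    rw [base_prod, pow_add, pow_add]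
    split_ifs <;> ring
  rw [hstep, abstract_sum (fib g) (mE1 k p) (mE1_mem_fib hg) w y yb r]
  have hwm : w (mE1 k p) = xb := by
    simp only [hw]
    exact if_neg not_odd_mV
  have hprod1 : ∏ a ∈ (fib g).erase (mE1 k p), (w a + 1) =
      (x+1) ^ ((((fib g).erase (mE1 k p)).filter
          fun a : ↥(Tnk k (p+2)) => Odd (a : ℕ)).card) *
      (xb+1) ^ ((((fib g).erase (mE1 k p)).filter
          fun a : ↥(Tnk k (p+2)) => Even (a : ℕ)).card) := by
    rw [← base_prod]
    apply Finset.prod_congr rfl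
    intro a ha
    simp only [hw]
    split_ifs <;> rfl
  have hprod2 : ∏ a ∈ (fib g).erase (mE1 k p), w a =
      x ^ ((((fib g).erase (mE1 k p)).filter
          fun a : ↥(Tnk k (p+2)) => Odd (a : ℕ)).card) *
      xb ^ ((((fib g).erase (mE1 k p)).filter
          fun a : ↥(Tnk k (p+2)) => Even (a : ℕ)).card) := by
    simp only [hw]
    rw [base_prod]
  rw [hwm, hprod1, hprod2, mo_g, me_g, hr]
  ring


lemma step_main (k p : ℕ) (R : Type) [CommRing R] (x y z xb yb zb : R) :
    Lam R (Tnk k (p+3)) x y z xb yb zb =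
      (y + xb) * Lam R (Tnk k (p+2)) (x+1) y z (xb+1) yb zb +
        (yb - y - xb) * Lam R (Tnk k (p+2)) x y z xb yb zb := by
  unfold Lam
  have hmain : ∑ f ∈ Staircases (Tnk k (p+3)),
      x ^ moS (Tnk k (p+3)) f * y ^ fdS (Tnk k (p+3)) f * z ^ siS (Tnk k (p+3)) f *
        xb ^ meS (Tnk k (p+3)) f * yb ^ fiS (Tnk k (p+3)) f * zb ^ sdS (Tnk k (p+3)) f
      = ∑ q ∈ (Staircases (Tnk k (p+2))).sigma
          (fun g => ((fib g).powerset).erase (fib g)),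
          (x ^ ((q.2.filter fun a : ↥(Tnk k (p+2)) => Odd (a : ℕ)).card) *
            y ^ (fdS (Tnk k (p+2)) q.1 +
              (if mE1 k p ∉ q.2 ∧ ¬ (fib q.1).erase (mE1 k p) ⊆ q.2 then 1 else 0)) *
            z ^ siS (Tnk k (p+2)) q.1 *
            xb ^ ((q.2.filter fun a : ↥(Tnk k (p+2)) => Even (a : ℕ)).card) *
            yb ^ (fiS (Tnk k (p+2)) q.1 +
              (if mE1 k p ∉ q.2 ∧ (fib q.1).erase (mE1 k p) ⊆ q.2 then 1 else 0)) *
            zb ^ sdS (Tnk k (p+2)) q.1) := by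
    refine Finset.sum_nbij'
      (i := fun f => (⟨Phi f, Bset f⟩ :
        Σ _ : (↥(Tnk k (p+2)) → ↥(Tnk k (p+2))), Finset ↥(Tnk k (p+2))))
      (j := fun q => Psi q.1 q.2) ?hi ?hj ?left ?right ?hw
    case hi =>
      intro f hf
      rw [Finset.mem_sigma]
      exact ⟨Phi_mem hf, Finset.mem_erase.mpr
        ⟨Bset_ne_fib hf, Finset.mem_powerset.mpr Bset_subset_fib⟩⟩
    case hj =>
      intro q hq
      rw [Finset.mem_sigma] at hq
      obtain ⟨hg, hB⟩ := hq
      obtain ⟨hne, hpow⟩ := Finset.mem_erase.mp hB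
      exact Psi_mem hg (Finset.mem_powerset.mp hpow) hne
    case left =>
      intro f hf
      exact Psi_Phi hf
    case right =>
      intro q hq
      obtain ⟨g, B⟩ := q
      rw [Finset.mem_sigma] at hq
      obtain ⟨hg, hB⟩ := hq
      obtain ⟨hne, hpow⟩ := Finset.mem_erase.mp hB
      have h1 : Phi (Psi g B) = g := Phi_Psi (Finset.mem_powerset.mp hpow)
      have h2 : Bset (Psi g B) = B := Bset_Psi
      simp only
      rw [h1, h2]
    case hw =>
      intro f hf
      rw [stat_mo, stat_me, stat_si hf, stat_sd hf, stat_fd hf, stat_fi hf]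
  rw [hmain]
  simp only [Finset.sum_sigma]
  rw [Finset.sum_congr rfl (fun g hg => innerSumW hg x y z xb yb zb)]
  rw [Finset.sum_add_distrib, ← Finset.mul_sum, ← Finset.mul_sum]

end Step

/-- `Λ_{T_1^k} = 1`, and for `n ≥ 3`,
`Λ_{T_n^k} = (y+x̄) Λ_{T_{n-1}^k}(x+1, x̄+1) + (ȳ - y - x̄) Λ_{T_{n-1}^k}`. -/



theorem lam_Tnk_recurrence (k : ℕ) (hk : 1 ≤ k) (R : Type) [CommRing R]
    (x y z xb yb zb : R) :
    Lam R (Tnk k 1) x y z xb yb zb = 1 ∧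
    ∀ n : ℕ, 3 ≤ n →
      Lam R (Tnk k n) x y z xb yb zb =
        (y + xb) * Lam R (Tnk k (n - 1)) (x + 1) y z (xb + 1) yb zb +
          (yb - y - xb) * Lam R (Tnk k (n - 1)) x y z xb yb zb := by
  constructor
  · exact lam_T1 k hk R x y z xb yb zb
  · intro n hn
    obtain ⟨p, rfl⟩ : ∃ p, n = p + 3 := ⟨n - 3, by omega⟩
    have h1 : p + 3 - 1 = p + 2 := by omega
    rw [h1]
    exact step_main k p R x y z xb yb zb

end
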